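/- Let Q, K₁, K₂ be positive definite Hermitian matrices and G₁, G₂ matrices such that G = [G₁; G₂] and K = diag(K₁, K₂). Writing V₂^c = Q Gᴴ (K + G Q Gᴴ)⁻¹ = [F₁, F₂] in blocks conformal with (M₁, M₂), the second block satisfies F₂ = P₁ G₂ᴴ (Σ₂ + G₂ P₁ G₂ᴴ)⁻¹ where P₁ = Q − Q G₁ᴴ (K₁ + G₁ Q G₁ᴴ)⁻¹ G₁ Q and Σ₂ = K₂. -/

import Mathlib

open Matrix ComplexOrder

section Aux

variable {K M₁ M₂ : ℕ}

/-- `P₁ = Q - Q G₁ᴴ (K₁ + G₁ Q G₁ᴴ)⁻¹ G₁ Q` is positive semidefinite. -/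
lemma prior_error_cov_posSemidef
    (Q : Matrix (Fin K) (Fin K) ℂ) (hQ : Q.PosDef)
    (G₁ : Matrix (Fin M₁) (Fin K) ℂ)
    (K₁ : Matrix (Fin M₁) (Fin M₁) ℂ) (hK₁ : K₁.PosDef) :
    (Q - Q * G₁ᴴ * (K₁ + G₁ * Q * G₁ᴴ)⁻¹ * G₁ * Q).PosSemidef := by
  have hA : (K₁ + G₁ * Q * G₁ᴴ).PosDef :=
    hK₁.add_posSemidef (hQ.posSemidef.mul_mul_conjTranspose_same G₁)
  letI := hA.isUnit.invertible
  have hBig : (fromBlocks (K₁ + G₁ * Q * G₁ᴴ) (G₁ * Q) ((G₁ * Q)ᴴ) Q).PosSemidef := by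
    have h1 : (fromRows (1 : Matrix (Fin M₁) (Fin M₁) ℂ)
        (0 : Matrix (Fin K) (Fin M₁) ℂ) * K₁ *
        (fromRows (1 : Matrix (Fin M₁) (Fin M₁) ℂ) (0 : Matrix (Fin K) (Fin M₁) ℂ))ᴴ).PosSemidef :=
      hK₁.posSemidef.mul_mul_conjTranspose_same _
    have h2 : (fromRows G₁ (1 : Matrix (Fin K) (Fin K) ℂ) * Q *
        (fromRows G₁ (1 : Matrix (Fin K) (Fin K) ℂ))ᴴ).PosSemidef :=
      hQ.posSemidef.mul_mul_conjTranspose_same _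
    have e1 : fromRows (1 : Matrix (Fin M₁) (Fin M₁) ℂ) (0 : Matrix (Fin K) (Fin M₁) ℂ) * K₁ *
        (fromRows (1 : Matrix (Fin M₁) (Fin M₁) ℂ) (0 : Matrix (Fin K) (Fin M₁) ℂ))ᴴ =
        fromBlocks K₁ 0 0 0 := by
      rw [conjTranspose_fromRows_eq_fromCols_conjTranspose, fromRows_mul,
        fromRows_mul_fromCols]
      simp
    have e2 : fromRows G₁ (1 : Matrix (Fin K) (Fin K) ℂ) * Q *
        (fromRows G₁ (1 : Matrix (Fin K) (Fin K) ℂ))ᴴ =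
        fromBlocks (G₁ * Q * G₁ᴴ) (G₁ * Q) ((G₁ * Q)ᴴ) Q := by
      rw [conjTranspose_fromRows_eq_fromCols_conjTranspose, fromRows_mul,
        fromRows_mul_fromCols, conjTranspose_mul, hQ.isHermitian.eq]
      simp [Matrix.mul_assoc]
    rw [e1] at h1; rw [e2] at h2
    have := h1.add h2
    rw [fromBlocks_add] at this
    simpa using this
  have := (PosDef.fromBlocks₁₁ (G₁ * Q) Q hA).mp hBig
  have hQG : (G₁ * Q)ᴴ = Q * G₁ᴴ := by
    rw [conjTranspose_mul, hQ.isHermitian.eq]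
  rw [hQG, ← Matrix.mul_assoc] at this
  exact this

end Aux

/-- The block of the centralized LMMSE receiver acting on the new AP's data equals
the local Kalman-type gain `T₂` computed from the prior error covariance `P₁`. -/
theorem centralized_lmmse_second_block (K M₁ M₂ : ℕ)
    (Q : Matrix (Fin K) (Fin K) ℂ) (hQ : Q.PosDef)
    (G₁ : Matrix (Fin M₁) (Fin K) ℂ) (G₂ : Matrix (Fin M₂) (Fin K) ℂ)
    (K₁ : Matrix (Fin M₁) (Fin M₁) ℂ) (K₂ : Matrix (Fin M₂) (Fin M₂) ℂ)
    (hK₁ : K₁.PosDef) (hK₂ : K₂.PosDef)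
    (P₁ : Matrix (Fin K) (Fin K) ℂ)
    (hP₁ : P₁ = Q - Q * G₁ᴴ * (K₁ + G₁ * Q * G₁ᴴ)⁻¹ * G₁ * Q) :
    ∀ (k : Fin K) (j : Fin M₂),
      (Q * (fromRows G₁ G₂)ᴴ *
        (fromBlocks K₁ 0 0 K₂ + fromRows G₁ G₂ * Q * (fromRows G₁ G₂)ᴴ)⁻¹)
          k (Sum.inr j) =
      (P₁ * G₂ᴴ * (K₂ + G₂ * P₁ * G₂ᴴ)⁻¹) k j := by
  set A := K₁ + G₁ * Q * G₁ᴴ with hA_def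
  set B := G₁ * Q * G₂ᴴ with hB_def
  set C := G₂ * Q * G₁ᴴ with hC_def
  set D := K₂ + G₂ * Q * G₂ᴴ with hD_def
  set S := K₂ + G₂ * P₁ * G₂ᴴ with hS_def
  have hA : A.PosDef := hK₁.add_posSemidef (hQ.posSemidef.mul_mul_conjTranspose_same G₁)
  have hP₁psd : P₁.PosSemidef := hP₁ ▸ prior_error_cov_posSemidef Q hQ G₁ K₁ hK₁
  have hS : S.PosDef := hK₂.add_posSemidef (hP₁psd.mul_mul_conjTranspose_same G₂)
  letI := hA.isUnit.invertible
  letI := hS.isUnit.invertible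
  -- the big matrix in block form
  have hGQG : fromBlocks K₁ 0 0 K₂ + fromRows G₁ G₂ * Q * (fromRows G₁ G₂)ᴴ =
      fromBlocks A B C D := by
    rw [conjTranspose_fromRows_eq_fromCols_conjTranspose, fromRows_mul,
      fromRows_mul_fromCols, fromBlocks_add, hA_def, hB_def, hC_def, hD_def]
    simp
  -- Schur complement identity
  have hSchur : D - C * A⁻¹ * B = S := by
    rw [hS_def, hD_def, hP₁, hB_def, hC_def]
    simp only [Matrix.mul_sub, Matrix.sub_mul, Matrix.mul_assoc]
    abel
  letI : Invertible (D - C * ⅟A * B) := by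
    rw [invOf_eq_nonsing_inv, hSchur]; exact hS.isUnit.invertible
  letI iM : Invertible (fromBlocks A B C D) := fromBlocks₁₁Invertible A B C D
  have hMinv : (fromBlocks A B C D)⁻¹ =
      fromBlocks (⅟A + ⅟A * B * ⅟(D - C * ⅟A * B) * C * ⅟A) (-(⅟A * B * ⅟(D - C * ⅟A * B)))
        (-(⅟(D - C * ⅟A * B) * C * ⅟A)) (⅟(D - C * ⅟A * B)) := by
    rw [← invOf_eq_nonsing_inv, invOf_fromBlocks₁₁_eq]
  have hinvS : ⅟(D - C * ⅟A * B) = S⁻¹ := by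
    letI : Invertible S := hS.isUnit.invertible
    rw [invOf_eq_nonsing_inv, invOf_eq_nonsing_inv, hSchur]
  have hinvA : ⅟A = A⁻¹ := invOf_eq_nonsing_inv A
  intro k j
  rw [hGQG, hMinv, hinvS, hinvA, conjTranspose_fromRows_eq_fromCols_conjTranspose,
    mul_fromCols, fromCols_mul_fromBlocks]
  have key : Q * G₁ᴴ * -(A⁻¹ * B * S⁻¹) + Q * G₂ᴴ * S⁻¹ = P₁ * G₂ᴴ * S⁻¹ := by
    rw [hP₁, hB_def]
    simp only [Matrix.mul_sub, Matrix.sub_mul, Matrix.mul_neg, Matrix.neg_mul,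
      Matrix.mul_assoc]
    abel
  rw [key, fromCols_apply_inr]
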